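/- arXiv:1204.1843 — 2 statements merged into one kernel-verified Lean document; each statement's English description precedes it below -/
import Mathlib

section
/- For every Schwartz function u on ℂⁿ and every j ∈ {1,…,n}, the partial derivatives of |u| satisfy |∂_{x_j}|u|(z)| ≤ |L_j u(z)| and |∂_{y_j}|u|(z)| ≤ |M_j u(z)| for almost every z ∈ ℂⁿ; consequently ‖ |u| ‖_{H¹(ℝ^{2n})} ≤ (2n+1) ‖u‖_{W̃^{1,2}}. -/
open MeasureTheory Real ENNReal

noncomputable section

/-- `L_j f = ∂_{x_j} f + (i y_j/2) f`, acting on functions on ℂⁿ ≃ ℝ^{2n}. -/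
def Lop (n : ℕ) (j : Fin n) (f : (Fin n → ℂ) → ℂ) (z : Fin n → ℂ) : ℂ :=
  fderiv ℝ f z (Pi.single j 1) + Complex.I * ((z j).im : ℂ) / 2 * f z

/-- `M_j f = ∂_{y_j} f − (i x_j/2) f`, acting on functions on ℂⁿ ≃ ℝ^{2n}. -/
def Mop (n : ℕ) (j : Fin n) (f : (Fin n → ℂ) → ℂ) (z : Fin n → ℂ) : ℂ :=
  fderiv ℝ f z (Pi.single j Complex.I) - Complex.I * ((z j).re : ℂ) / 2 * f z

/-- The Sobolev norm `‖f‖_{W̃^{1,p}} = max{‖f‖_{L^p}, ‖L_j f‖_{L^p}, ‖M_j f‖_{L^p} : j}`. -/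
def sobNorm (n : ℕ) (p : ℝ≥0∞) (f : (Fin n → ℂ) → ℂ) : ℝ≥0∞ :=
  max (eLpNorm f p volume)
    (⨆ j : Fin n, max (eLpNorm (Lop n j f) p volume) (eLpNorm (Mop n j f) p volume))

/-- The `H¹(ℝ^{2n})` norm of a real valued function on ℂⁿ ≃ ℝ^{2n}, as the sum of the `L²`
norms of the function and of its `2n` partial derivatives. -/
def H1Norm (n : ℕ) (g : (Fin n → ℂ) → ℝ) : ℝ≥0∞ :=
  eLpNorm g 2 volume +
    ∑ j : Fin n,
      (eLpNorm (fun z => fderiv ℝ g z (Pi.single j 1)) 2 volume +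
        eLpNorm (fun z => fderiv ℝ g z (Pi.single j Complex.I)) 2 volume)

lemma key {n : ℕ} (u : SchwartzMap (Fin n → ℂ) ℂ) (z e : Fin n → ℂ) (c : ℂ)
    (hc : c.re = 0) :
    |fderiv ℝ (fun w => ‖u w‖) z e| ≤
      ‖fderiv ℝ (⇑u) z e + c * u z‖ := by
  by_cases h : u z = 0
  · have hmin : IsLocalMin (fun w => ‖u w‖) z := by
      apply Filter.Eventually.of_forall
      intro w
      simp [h]
    rw [hmin.fderiv_eq_zero]
    simpa using (norm_nonneg _)
  · set a := u z with ha
    set D := fderiv ℝ (⇑u) z with hDdef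
    have hD : HasFDerivAt (⇑u) D z := u.differentiableAt.hasFDerivAt
    have hre : HasFDerivAt (fun w => (u w).re) (Complex.reCLM.comp D) z :=
      Complex.reCLM.hasFDerivAt.comp z hD
    have him : HasFDerivAt (fun w => (u w).im) (Complex.imCLM.comp D) z :=
      Complex.imCLM.hasFDerivAt.comp z hD
    have hnsq : HasFDerivAt (fun w => Complex.normSq (u w))
        ((a.re • (Complex.reCLM.comp D) + a.re • (Complex.reCLM.comp D)) +
          (a.im • (Complex.imCLM.comp D) + a.im • (Complex.imCLM.comp D))) z := by
      exact ((hre.mul hre).add (him.mul him)).congr_of_eventuallyEq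
        (Filter.Eventually.of_forall fun w => by simp [Complex.normSq_apply])
    have ht : Complex.normSq a ≠ 0 := by
      simpa [Complex.normSq_eq_zero] using h
    have hs : HasDerivAt Real.sqrt (1 / (2 * Real.sqrt (Complex.normSq a)))
        (Complex.normSq a) := Real.hasDerivAt_sqrt ht
    have hg : HasFDerivAt (fun w => ‖u w‖)
        ((1 / (2 * Real.sqrt (Complex.normSq a))) •
          ((a.re • (Complex.reCLM.comp D) + a.re • (Complex.reCLM.comp D)) +
            (a.im • (Complex.imCLM.comp D) + a.im • (Complex.imCLM.comp D)))) z := by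
      have := hs.comp_hasFDerivAt z hnsq
      simpa [Function.comp_def, Complex.norm_def] using this
    have hr : 0 < ‖a‖ := by
      simpa [norm_pos_iff] using h
    have hsq : Real.sqrt (Complex.normSq a) = ‖a‖ := by rw [Complex.norm_def]
      
    set d := D e with hd
    have hval : fderiv ℝ (fun w => ‖u w‖) z e =
        (a.re * d.re + a.im * d.im) / ‖a‖ := by
      rw [hg.fderiv]
      simp only [ContinuousLinearMap.smul_apply, ContinuousLinearMap.add_apply,
        ContinuousLinearMap.comp_apply, Complex.reCLM_apply, Complex.imCLM_apply, hsq,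
        smul_eq_mul]
      field_simp
      ring
    rw [hval]
    have hkey : a.re * d.re + a.im * d.im = ((starRingEnd ℂ) a * (d + c * a)).re := by
      simp [Complex.mul_re, Complex.mul_im, Complex.add_re, Complex.add_im, hc]
      ring
    rw [abs_div, abs_of_pos hr, div_le_iff₀ hr, hkey]
    calc |((starRingEnd ℂ) a * (d + c * a)).re|
        ≤ ‖(starRingEnd ℂ) a * (d + c * a)‖ := Complex.abs_re_le_norm _
      _ = ‖d + c * a‖ * ‖a‖ := by
          rw [norm_mul, Complex.norm_conj]; ring

/-- For Schwartz `u` on ℂⁿ, a.e. `|∂_{x_j}|u|| ≤ |L_j u|` and `|∂_{y_j}|u|| ≤ |M_j u|`;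
consequently `‖|u|‖_{H¹(ℝ^{2n})} ≤ (2n+1) ‖u‖_{W̃^{1,2}}`. -/
theorem stmt7 (n : ℕ) (u : SchwartzMap (Fin n → ℂ) ℂ) :
    (∀ j : Fin n, ∀ᵐ z : Fin n → ℂ,
      |fderiv ℝ (fun w => ‖u w‖) z (Pi.single j 1)| ≤
          ‖Lop n j (⇑u) z‖ ∧
      |fderiv ℝ (fun w => ‖u w‖) z (Pi.single j Complex.I)| ≤
          ‖Mop n j (⇑u) z‖) ∧
    H1Norm n (fun z => ‖u z‖) ≤ ((2 * n + 1 : ℕ) : ℝ≥0∞) * sobNorm n 2 (⇑u) := by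
  have hpt : ∀ j : Fin n, ∀ z : Fin n → ℂ,
      |fderiv ℝ (fun w => ‖u w‖) z (Pi.single j 1)| ≤
          ‖Lop n j (⇑u) z‖ ∧
      |fderiv ℝ (fun w => ‖u w‖) z (Pi.single j Complex.I)| ≤
          ‖Mop n j (⇑u) z‖ := by
    intro j z
    constructor
    · have := key u z (Pi.single j 1) (Complex.I * ((z j).im : ℂ) / 2) (by simp)
      simpa [Lop, mul_assoc, mul_comm, mul_left_comm, div_eq_mul_inv] using this
    · have := key u z (Pi.single j Complex.I) (-(Complex.I * ((z j).re : ℂ) / 2)) (by simp)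
      simpa [Mop, sub_eq_add_neg, neg_mul, mul_assoc, mul_comm, mul_left_comm,
        div_eq_mul_inv] using this
  refine ⟨fun j => Filter.Eventually.of_forall (hpt j), ?_⟩
  set S := sobNorm n 2 (⇑u) with hS
  have h0 : eLpNorm (fun z => ‖u z‖) 2 volume ≤ S := by
    have : (fun z => ‖u z‖) = fun z => ‖u z‖ := by
      rfl
    rw [this, eLpNorm_norm]
    exact le_max_left _ _
  have hL : ∀ j : Fin n,
      eLpNorm (fun z => fderiv ℝ (fun w => ‖u w‖) z (Pi.single j 1)) 2 volume
        ≤ S := by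
    intro j
    refine le_trans (eLpNorm_mono_ae (g := Lop n j ⇑u) ?_) ?_
    · exact Filter.Eventually.of_forall fun z => by
        simpa [Real.norm_eq_abs] using (hpt j z).1
    · exact le_trans (le_trans (le_max_left _ _) (le_iSup (fun j : Fin n =>
        max (eLpNorm (Lop n j ⇑u) 2 volume) (eLpNorm (Mop n j ⇑u) 2 volume)) j))
        (le_max_right _ _)
  have hM : ∀ j : Fin n,
      eLpNorm (fun z => fderiv ℝ (fun w => ‖u w‖) z (Pi.single j Complex.I)) 2
        volume ≤ S := by
    intro j
    refine le_trans (eLpNorm_mono_ae (g := Mop n j ⇑u) ?_) ?_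
    · exact Filter.Eventually.of_forall fun z => by
        simpa [Real.norm_eq_abs] using (hpt j z).2
    · exact le_trans (le_trans (le_max_right _ _) (le_iSup (fun j : Fin n =>
        max (eLpNorm (Lop n j ⇑u) 2 volume) (eLpNorm (Mop n j ⇑u) 2 volume)) j))
        (le_max_right _ _)
  calc H1Norm n (fun z => ‖u z‖)
      ≤ S + ∑ _j : Fin n, (S + S) := by
        unfold H1Norm
        exact add_le_add h0 (Finset.sum_le_sum fun j _ => add_le_add (hL j) (hM j))
    _ = ((2 * n + 1 : ℕ) : ℝ≥0∞) * S := by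
        rw [Finset.sum_const, Finset.card_univ, Fintype.card_fin]
        push_cast
        rw [nsmul_eq_mul]
        ring
end
end

section
/- Fix j ∈ {1,…,n} and w = u + iv ∈ ℂⁿ. For every differentiable f : ℂⁿ → ℂ and z = x + iy ∈ ℂⁿ, the identity (∂_{x_j} + i y_j/2)[ f(z−w) e^{(i/2) Im(z·w̄)} ] = e^{(i/2) Im(z·w̄)} (L_j f)(z−w) holds, and likewise (∂_{y_j} − i x_j/2)[ f(z−w) e^{(i/2) Im(z·w̄)} ] = e^{(i/2) Im(z·w̄)} (M_j f)(z−w), where the outer derivatives are taken in the z variable. Consequently, for every Schwartz function f on ℂⁿ and every bounded measurable g : ℂⁿ → ℂ, L_j(f × g) = (L_j f) × g and M_j(f × g) = (M_j f) × g. -/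
open MeasureTheory Real ENNReal

noncomputable section

/-- The twist phase `e^{(i/2) Im(z·w̄)}`. -/
def twistPhase (n : ℕ) (z w : Fin n → ℂ) : ℂ :=
  Complex.exp (Complex.I / 2 * ((∑ j, z j * (starRingEnd ℂ) (w j)).im : ℂ))

/-- Twisted convolution `(f × g)(z) = ∫ f(z−w) g(w) e^{(i/2) Im(z·w̄)} dw` on ℂⁿ. -/
def twistedConv (n : ℕ) (f g : (Fin n → ℂ) → ℂ) (z : Fin n → ℂ) : ℂ :=
  ∫ w : Fin n → ℂ, f (z - w) * g w * twistPhase n z w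

namespace Stmt9Aux

lemma norm_twistPhase (n : ℕ) (z w : Fin n → ℂ) : ‖twistPhase n z w‖ = 1 := by
  rw [twistPhase, Complex.norm_exp]
  simp [Complex.mul_re, Complex.div_re]

lemma continuous_twistPhase (n : ℕ) (z : Fin n → ℂ) :
    Continuous (fun w => twistPhase n z w) := by
  unfold twistPhase
  refine Complex.continuous_exp.comp (continuous_const.mul (Complex.continuous_ofReal.comp
    (Complex.continuous_im.comp (continuous_finset_sum _ fun k _ => ?_))))
  exact continuous_const.mul (Complex.continuous_conj.comp (continuous_apply k))

def psi (n : ℕ) (w : Fin n → ℂ) : (Fin n → ℂ) →L[ℝ] ℝ :=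
  ∑ k, Complex.imCLM.comp ((starRingEnd ℂ) (w k) • (ContinuousLinearMap.proj k : (Fin n → ℂ) →L[ℝ] ℂ))

lemma psi_apply (n : ℕ) (w h : Fin n → ℂ) :
    psi n w h = (∑ k, h k * (starRingEnd ℂ) (w k)).im := by
  simp [psi, Complex.im_sum, mul_comm]

def Psi (n : ℕ) (w : Fin n → ℂ) : (Fin n → ℂ) →L[ℝ] ℂ :=
  Complex.ofRealCLM.comp (psi n w)

lemma continuous_Psi (n : ℕ) : Continuous (fun w => Psi n w) := by
  have h1 : Continuous (fun w => psi n w) := by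
    apply continuous_finset_sum
    intro k _
    have h2 : Continuous fun w : Fin n → ℂ =>
        ((starRingEnd ℂ) (w k) • (ContinuousLinearMap.proj k : (Fin n → ℂ) →L[ℝ] ℂ)) :=
      (Complex.continuous_conj.comp (continuous_apply k)).smul continuous_const
    exact ((ContinuousLinearMap.compL ℝ (Fin n → ℂ) ℂ ℝ Complex.imCLM).continuous).comp h2
  exact ((ContinuousLinearMap.compL ℝ (Fin n → ℂ) ℝ ℂ Complex.ofRealCLM).continuous).comp h1

lemma Psi_norm_le (n : ℕ) (w : Fin n → ℂ) : ‖Psi n w‖ ≤ (n : ℝ) * ‖w‖ := by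
  have habs : ∀ k, ‖w k‖ ≤ ‖w‖ := fun k => norm_le_pi_norm w k
  apply ContinuousLinearMap.opNorm_le_bound _ (by positivity)
  intro h
  have heq : Psi n w h = (((∑ k, h k * (starRingEnd ℂ) (w k)).im : ℝ) : ℂ) := by
    simp [Psi, psi, Complex.im_sum, mul_comm]
  rw [heq]
  calc ‖(((∑ k, h k * (starRingEnd ℂ) (w k)).im : ℝ) : ℂ)‖
      = |(∑ k, (h k * (starRingEnd ℂ) (w k)).im)| := by
        rw [Complex.norm_real, Complex.im_sum]; rfl
    _ ≤ ∑ k, |(h k * (starRingEnd ℂ) (w k)).im| := Finset.abs_sum_le_sum_abs _ _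
    _ ≤ ∑ _k : Fin n, ‖w‖ * ‖h‖ := by
        apply Finset.sum_le_sum
        intro k _
        calc |(h k * (starRingEnd ℂ) (w k)).im| ≤ ‖h k * (starRingEnd ℂ) (w k)‖ :=
              Complex.abs_im_le_norm _
          _ = ‖h k‖ * ‖w k‖ := by simp [map_mul]
          _ ≤ ‖h‖ * ‖w‖ := by
              have := norm_le_pi_norm h k
              exact mul_le_mul this (habs k) (norm_nonneg _) (norm_nonneg _)
          _ = ‖w‖ * ‖h‖ := mul_comm _ _
    _ = (n : ℝ) * ‖w‖ * ‖h‖ := by rw [Finset.sum_const, Finset.card_univ, Fintype.card_fin]; ring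

lemma hasFDeriv_phase (n : ℕ) (w z : Fin n → ℂ) :
    HasFDerivAt (fun ζ => twistPhase n ζ w)
      ((twistPhase n z w * (Complex.I / 2)) • Psi n w) z := by
  have h1 : (fun ζ => twistPhase n ζ w) = fun ζ => Complex.exp (((Complex.I/2) • Psi n w) ζ) := by
    funext ζ
    simp [twistPhase, Psi, psi_apply, smul_eq_mul]
  have h2 : HasFDerivAt (fun ζ : Fin n → ℂ => ((Complex.I/2) • Psi n w) ζ)
      ((Complex.I/2) • Psi n w) z := ((Complex.I/2) • Psi n w).hasFDerivAt
  have h3 := h2.cexp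
  rw [← h1] at h3
  have h4 : Complex.exp (((Complex.I/2) • Psi n w) z) = twistPhase n z w := by
    simp [twistPhase, Psi, psi_apply, smul_eq_mul]
  rw [smul_smul, h4] at h3
  exact h3

/-- derivative of `ζ ↦ f (ζ - w) * twistPhase n ζ w` at `z`. -/
def B (n : ℕ) (f : (Fin n → ℂ) → ℂ) (w z : Fin n → ℂ) : (Fin n → ℂ) →L[ℝ] ℂ :=
  twistPhase n z w • fderiv ℝ f (z - w) +
    (f (z - w) * (twistPhase n z w * (Complex.I / 2))) • Psi n w

lemma hasFDeriv_B {n : ℕ} {f : (Fin n → ℂ) → ℂ} (hf : Differentiable ℝ f) (w z : Fin n → ℂ) :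
    HasFDerivAt (fun ζ => f (ζ - w) * twistPhase n ζ w) (B n f w z) z := by
  have h1 : HasFDerivAt (fun ζ : Fin n → ℂ => f (ζ - w)) (fderiv ℝ f (z - w)) z := by
    have := (hf (z - w)).hasFDerivAt.comp z ((hasFDerivAt_id z).sub_const w)
    simp at this; exact this
  have h2 := hasFDeriv_phase n w z
  have h3 := h1.mul h2
  refine h3.congr_fderiv (Eq.symm ?_)
  unfold B
  rw [smul_smul]
  ring_nf
  rw [add_comm]

lemma B_single (n : ℕ) (j : Fin n) (f : (Fin n → ℂ) → ℂ) (w z : Fin n → ℂ) (a : ℂ) :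
    B n f w z (Pi.single j a) = twistPhase n z w * fderiv ℝ f (z - w) (Pi.single j a) +
      f (z - w) * twistPhase n z w * (Complex.I / 2) *
        (((a * (starRingEnd ℂ) (w j)).im : ℝ) : ℂ) := by
  simp only [B, ContinuousLinearMap.add_apply, ContinuousLinearMap.smul_apply, Psi,
    ContinuousLinearMap.comp_apply, psi_apply, smul_eq_mul, Complex.ofRealCLM_apply]
  have : (∑ k, (Pi.single j a : Fin n → ℂ) k * (starRingEnd ℂ) (w k)) = a * (starRingEnd ℂ) (w j) := by
    rw [Finset.sum_eq_single j]
    · simp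
    · intro k _ hk; simp [Pi.single_apply, hk]
    · simp
  rw [this]; ring

lemma B_Lop (n : ℕ) (j : Fin n) (f : (Fin n → ℂ) → ℂ) (w z : Fin n → ℂ) :
    B n f w z (Pi.single j 1) + Complex.I * ((z j).im : ℂ) / 2 * (f (z - w) * twistPhase n z w) =
      twistPhase n z w * Lop n j f (z - w) := by
  rw [B_single, Lop]
  have h1 : ((((1:ℂ) * (starRingEnd ℂ) (w j)).im : ℝ) : ℂ) = -((w j).im : ℂ) := by simp
  have h2 : (((z - w) j).im : ℂ) = ((z j).im : ℂ) - ((w j).im : ℂ) := by simp [Complex.sub_im]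
  rw [h1, h2]; ring

lemma B_Mop (n : ℕ) (j : Fin n) (f : (Fin n → ℂ) → ℂ) (w z : Fin n → ℂ) :
    B n f w z (Pi.single j Complex.I) - Complex.I * ((z j).re : ℂ) / 2 * (f (z - w) * twistPhase n z w) =
      twistPhase n z w * Mop n j f (z - w) := by
  rw [B_single, Mop]
  have h1 : (((Complex.I * (starRingEnd ℂ) (w j)).im : ℝ) : ℂ) = ((w j).re : ℂ) := by
    simp [Complex.mul_im]
  have h2 : (((z - w) j).re : ℂ) = ((z j).re : ℂ) - ((w j).re : ℂ) := by simp [Complex.sub_re]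
  rw [h1, h2]; ring

lemma continuous_schwartz_fderiv (n : ℕ) (f : SchwartzMap (Fin n → ℂ) ℂ) :
    Continuous (fderiv ℝ (⇑f)) :=
  (f.smooth ⊤).continuous_fderiv (by norm_num)

lemma schwartz_decay (n : ℕ) (f : SchwartzMap (Fin n → ℂ) ℂ) :
    ∃ C : ℝ, 0 ≤ C ∧ ∀ x, (1 + ‖x‖) ^ (2*n+2) * ‖f x‖ ≤ C ∧
      (1 + ‖x‖) ^ (2*n+2) * ‖fderiv ℝ (⇑f) x‖ ≤ C := by
  set C : ℝ := 2 ^ (2*n+2) * ((Finset.Iic (2*n+2, 1)).sup fun m => SchwartzMap.seminorm ℝ m.1 m.2) f with hC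
  refine ⟨C, by positivity, fun x => ⟨?_, ?_⟩⟩
  · have := SchwartzMap.one_add_le_sup_seminorm_apply (𝕜 := ℝ) (m := (2*n+2, 1))
      (le_refl (2*n+2)) (Nat.zero_le 1) f x
    rwa [norm_iteratedFDeriv_zero] at this
  · have := SchwartzMap.one_add_le_sup_seminorm_apply (𝕜 := ℝ) (m := (2*n+2, 1))
      (le_refl (2*n+2)) (le_refl 1) f x
    have h1 : ‖iteratedFDeriv ℝ 1 (⇑f) x‖ = ‖fderiv ℝ (⇑f) x‖ := by
      rw [← norm_iteratedFDeriv_fderiv, norm_iteratedFDeriv_zero]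
    rwa [h1] at this

lemma integrable_inv_pow (n : ℕ) (z₀ : Fin n → ℂ) :
    Integrable (fun w : Fin n → ℂ => ((1 + ‖z₀ - w‖) ^ (2*n+1 : ℕ))⁻¹) := by
  have hr : (Module.finrank ℝ (Fin n → ℂ) : ℝ) < (2*n+1 : ℕ) := by
    simp [Module.finrank_pi_fintype]
    nlinarith [Complex.finrank_real_complex]
  have h0 : Integrable (fun x : Fin n → ℂ => (1 + ‖x‖) ^ (-((2*n+1 : ℕ) : ℝ))) :=
    integrable_one_add_norm hr
  have h1 := h0.comp_sub_left z₀
  refine h1.congr (Filter.Eventually.of_forall fun w => ?_)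
  simp only []
  rw [Real.rpow_neg (by positivity : (0:ℝ) ≤ 1 + ‖z₀ - w‖), Real.rpow_natCast]


lemma arith {M C a b wn R D0 d N G : ℝ} {m : ℕ}
    (hM0 : 0 ≤ M) (hC0 : 0 ≤ C) (ha0 : 0 ≤ a) (hb0 : 0 ≤ b) (hd1 : 1 ≤ d)
    (hD00 : 0 < D0) (hCa : d ^ (m+1) * a ≤ C) (hCb : d ^ (m+1) * b ≤ C)
    (hw : wn ≤ R * d) (hR : 1 ≤ R) (hwn0 : 0 ≤ wn) (hD0 : D0 ≤ 2 * d)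
    (hN0 : 0 ≤ N) (hG0 : 0 ≤ G) (hgB : G ≤ M * (b + a * (N * wn))) :
    G ≤ (M * (C + C * (N * R)) * 2 ^ m) * (D0 ^ m)⁻¹ := by
  have hd0 : (0:ℝ) ≤ d := le_trans zero_le_one hd1
  have hp0 : (0:ℝ) ≤ d ^ m := pow_nonneg hd0 m
  have hq : d ^ (m+1) = d ^ m * d := pow_succ d m
  rw [← div_eq_mul_inv, le_div_iff₀ (pow_pos hD00 m)]
  have hb' : b * d ^ m ≤ C := by
    nlinarith [mul_nonneg (mul_nonneg hb0 hp0) (sub_nonneg.mpr hd1)]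
  have ha' : a * (N * wn) * d ^ m ≤ C * (N * R) := by
    have h1 : a * wn ≤ a * (R * d) := mul_le_mul_of_nonneg_left hw ha0
    calc a * (N * wn) * d ^ m = N * (a * wn * d ^ m) := by ring
      _ ≤ N * (a * (R * d) * d ^ m) :=
          mul_le_mul_of_nonneg_left (mul_le_mul_of_nonneg_right h1 hp0) hN0
      _ = N * (R * (d ^ (m+1) * a)) := by rw [hq]; ring
      _ ≤ N * (R * C) := by
          have hR0 : (0:ℝ) ≤ R := le_trans zero_le_one hR
          exact mul_le_mul_of_nonneg_left (mul_le_mul_of_nonneg_left hCa hR0) hN0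
      _ = C * (N * R) := by ring
  have hsum : (b + a * (N * wn)) * d ^ m ≤ C + C * (N * R) := by nlinarith
  have hsum0 : (0:ℝ) ≤ b + a * (N * wn) := by positivity
  have h1 : D0 ^ m ≤ 2 ^ m * d ^ m := by
    rw [← mul_pow]; exact pow_le_pow_left₀ hD00.le hD0 m
  calc G * D0 ^ m ≤ (M * (b + a * (N * wn))) * (2 ^ m * d ^ m) :=
        mul_le_mul hgB h1 (pow_nonneg hD00.le m) (mul_nonneg hM0 hsum0)
    _ = M * ((b + a * (N * wn)) * d ^ m) * 2 ^ m := by ring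
    _ ≤ M * (C + C * (N * R)) * 2 ^ m := by
        refine mul_le_mul_of_nonneg_right (mul_le_mul_of_nonneg_left hsum hM0) (by positivity)

lemma key {n : ℕ} (f : SchwartzMap (Fin n → ℂ) ℂ) (g : (Fin n → ℂ) → ℂ) (hg : Measurable g)
    (M : ℝ) (hM : ∀ z, ‖g z‖ ≤ M) (z₀ : Fin n → ℂ) :
    HasFDerivAt (twistedConv n (⇑f) g) (∫ w, g w • B n (⇑f) w z₀) z₀ ∧
      Integrable (fun w => g w • B n (⇑f) w z₀) ∧
      Integrable (fun w => f (z₀ - w) * g w * twistPhase n z₀ w) := by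
  have hM0 : 0 ≤ M := le_trans (norm_nonneg _) (hM z₀)
  obtain ⟨C, hC0, hC⟩ := schwartz_decay n f
  set K : ℝ := M * (C + C * ((n : ℝ) * (‖z₀‖ + 1))) * 2 ^ (2*n+1) with hK
  set bound : (Fin n → ℂ) → ℝ := fun w => K * ((1 + ‖z₀ - w‖) ^ (2*n+1 : ℕ))⁻¹ with hbound
  -- measurability of the integrand
  have hmeas : ∀ z : Fin n → ℂ, AEStronglyMeasurable
      (fun w => f (z - w) * g w * twistPhase n z w) volume := by
    intro z
    have h1 : Continuous fun w : Fin n → ℂ => f (z - w) :=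
      f.continuous.comp (continuous_const.sub continuous_id)
    exact ((h1.aestronglyMeasurable.mul hg.aestronglyMeasurable).mul
      (continuous_twistPhase n z).aestronglyMeasurable)
  -- integrability of the integrand at z₀
  have hFint : Integrable (fun w => f (z₀ - w) * g w * twistPhase n z₀ w) := by
    have h2 : Integrable (fun w : Fin n → ℂ => M * ‖f (z₀ - w)‖) :=
      ((f.integrable.norm).comp_sub_left z₀).const_mul M
    refine Integrable.mono' h2 (hmeas z₀) (Filter.Eventually.of_forall fun w => ?_)
    rw [norm_mul, norm_mul, norm_twistPhase, mul_one]
    calc ‖f (z₀ - w)‖ * ‖g w‖ ≤ ‖f (z₀ - w)‖ * M := by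
          gcongr; exact hM w
      _ = M * ‖f (z₀ - w)‖ := mul_comm _ _
  -- continuity of B in w
  have hcontB : ∀ z : Fin n → ℂ, Continuous (fun w => B n (⇑f) w z) := by
    intro z
    have h1 : Continuous fun w : Fin n → ℂ => f (z - w) :=
      f.continuous.comp (continuous_const.sub continuous_id)
    have h2 : Continuous fun w : Fin n → ℂ => fderiv ℝ (⇑f) (z - w) :=
      (continuous_schwartz_fderiv n f).comp (continuous_const.sub continuous_id)
    exact ((continuous_twistPhase n z).smul h2).add
      ((h1.mul ((continuous_twistPhase n z).mul continuous_const)).smul (continuous_Psi n))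
  have hF'meas : ∀ z, AEStronglyMeasurable (fun w => g w • B n (⇑f) w z) volume := fun z =>
    hg.aestronglyMeasurable.smul (hcontB z).aestronglyMeasurable
  -- the uniform bound on the ball
  have hball : ∀ w : Fin n → ℂ, ∀ z ∈ Metric.ball z₀ 1, ‖g w • B n (⇑f) w z‖ ≤ bound w := by
    intro w z hz
    have hz1 : ‖z - z₀‖ < 1 := by rwa [Metric.mem_ball, dist_eq_norm] at hz
    -- ‖B‖ ≤ b + a * (n * ‖w‖)
    have hBle : ‖B n (⇑f) w z‖ ≤ ‖fderiv ℝ (⇑f) (z - w)‖ +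
        ‖f (z - w)‖ * ((n : ℝ) * ‖w‖) := by
      refine le_trans (norm_add_le _ _) ?_
      have e1 : ‖twistPhase n z w • fderiv ℝ (⇑f) (z - w)‖ = ‖fderiv ℝ (⇑f) (z - w)‖ := by
        rw [norm_smul (twistPhase n z w) (fderiv ℝ (⇑f) (z - w)), norm_twistPhase, one_mul]
      have e2 : ‖(f (z - w) * (twistPhase n z w * (Complex.I / 2))) • Psi n w‖ ≤
          ‖f (z - w)‖ * ((n : ℝ) * ‖w‖) := by
        rw [norm_smul (f (z - w) * (twistPhase n z w * (Complex.I / 2))) (Psi n w)]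
        have e3 : ‖f (z - w) * (twistPhase n z w * (Complex.I / 2))‖ ≤ ‖f (z - w)‖ := by
          rw [norm_mul, norm_mul, norm_twistPhase, one_mul]
          have h5 : ‖Complex.I / 2‖ ≤ 1 := by
            norm_num [norm_div]
          nlinarith [norm_nonneg (f (z - w)), norm_nonneg (Complex.I / 2)]
        exact mul_le_mul e3 (Psi_norm_le n w) (norm_nonneg _) (norm_nonneg _)
      rw [e1]; exact add_le_add le_rfl e2
    have hgB : ‖g w • B n (⇑f) w z‖ ≤
        M * (‖fderiv ℝ (⇑f) (z - w)‖ + ‖f (z - w)‖ * ((n : ℝ) * ‖w‖)) := by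
      rw [norm_smul (g w) (B n (⇑f) w z)]
      exact mul_le_mul (hM w) hBle (norm_nonneg _) hM0
    have hw : ‖w‖ ≤ (‖z₀‖ + 1) * (1 + ‖z - w‖) := by
      have h0 : z - (z - w) = w := sub_sub_cancel z w
      have h1 : ‖w‖ ≤ ‖z‖ + ‖z - w‖ := by
        calc ‖w‖ = ‖z - (z - w)‖ := by rw [h0]
          _ ≤ ‖z‖ + ‖z - w‖ := norm_sub_le _ _
      have h2 : ‖z‖ ≤ ‖z₀‖ + 1 := by
        have h0' : z₀ + (z - z₀) = z := by abel
        calc ‖z‖ = ‖z₀ + (z - z₀)‖ := by rw [h0']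
          _ ≤ ‖z₀‖ + ‖z - z₀‖ := norm_add_le _ _
          _ ≤ ‖z₀‖ + 1 := by linarith
      nlinarith [norm_nonneg (z - w), norm_nonneg z₀, norm_nonneg w]
    have hD0 : 1 + ‖z₀ - w‖ ≤ 2 * (1 + ‖z - w‖) := by
      have h0 : (z₀ - z) + (z - w) = z₀ - w := by abel
      have h1 : ‖z₀ - w‖ ≤ ‖z₀ - z‖ + ‖z - w‖ := by
        calc ‖z₀ - w‖ = ‖(z₀ - z) + (z - w)‖ := by rw [h0]
          _ ≤ ‖z₀ - z‖ + ‖z - w‖ := norm_add_le _ _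
      have h2 : ‖z₀ - z‖ = ‖z - z₀‖ := norm_sub_rev _ _
      linarith [norm_nonneg (z - w)]
    have hCa : (1 + ‖z - w‖) ^ (2*n+1+1) * ‖f (z - w)‖ ≤ C := by
      have h := (hC (z - w)).1
      have e : 2*n+1+1 = 2*n+2 := by omega
      rw [e]; exact h
    have hCb : (1 + ‖z - w‖) ^ (2*n+1+1) * ‖fderiv ℝ (⇑f) (z - w)‖ ≤ C := by
      have h := (hC (z - w)).2
      have e : 2*n+1+1 = 2*n+2 := by omega
      rw [e]; exact h
    have harith := arith (m := 2*n+1) hM0 hC0 (norm_nonneg (f (z - w)))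
      (norm_nonneg (fderiv ℝ (⇑f) (z - w))) (le_add_of_nonneg_right (norm_nonneg (z - w)))
      (by positivity : (0:ℝ) < 1 + ‖z₀ - w‖) hCa hCb hw
      (le_add_of_nonneg_left (norm_nonneg z₀)) (norm_nonneg w) hD0
      (Nat.cast_nonneg n) (norm_nonneg _) hgB
    rw [hbound]
    exact harith
  -- integrable bound
  have hboundInt : Integrable bound := by
    rw [hbound]
    exact (integrable_inv_pow n z₀).const_mul K
  -- differentiability of the integrand
  have hdiff : ∀ w : Fin n → ℂ, ∀ z ∈ Metric.ball z₀ 1,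
      HasFDerivAt (fun z => f (z - w) * g w * twistPhase n z w) (g w • B n (⇑f) w z) z := by
    intro w z _
    have h1 := (hasFDeriv_B f.differentiable w z).mul_const (g w)
    have h2 : (fun ζ => f (ζ - w) * g w * twistPhase n ζ w) =
        fun ζ => (f (ζ - w) * twistPhase n ζ w) * g w := by
      funext ζ; ring
    rw [h2]
    exact h1
  have hmain := hasFDerivAt_integral_of_dominated_of_fderiv_le (𝕜 := ℝ)
    (F := fun z w => f (z - w) * g w * twistPhase n z w)
    (F' := fun z w => g w • B n (⇑f) w z) (x₀ := z₀) (bound := bound)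
    (Metric.ball_mem_nhds z₀ zero_lt_one) (Filter.Eventually.of_forall hmeas) hFint (hF'meas z₀)
    (Filter.Eventually.of_forall fun w z hz => hball w z hz) hboundInt
    (Filter.Eventually.of_forall fun w z hz => hdiff w z hz)
  refine ⟨hmain, ?_, hFint⟩
  exact Integrable.mono' hboundInt (hF'meas z₀)
    (Filter.Eventually.of_forall fun w => hball w z₀ (Metric.mem_ball_self zero_lt_one))

end Stmt9Aux

open Stmt9Aux in
/-- The commutation identity
`(∂_{x_j} + i y_j/2)[f(z−w) e^{(i/2)Im(z·w̄)}] = e^{(i/2)Im(z·w̄)} (L_j f)(z−w)` (and the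
analogue for `M_j`), and consequently `L_j (f × g) = (L_j f) × g`,
`M_j (f × g) = (M_j f) × g` for Schwartz `f` and bounded measurable `g`. -/
theorem stmt9 (n : ℕ) (j : Fin n) (w : Fin n → ℂ) :
    (∀ f : (Fin n → ℂ) → ℂ, Differentiable ℝ f → ∀ z : Fin n → ℂ,
      Lop n j (fun ζ => f (ζ - w) * twistPhase n ζ w) z =
          twistPhase n z w * Lop n j f (z - w) ∧
      Mop n j (fun ζ => f (ζ - w) * twistPhase n ζ w) z =
          twistPhase n z w * Mop n j f (z - w)) ∧
    (∀ f : SchwartzMap (Fin n → ℂ) ℂ, ∀ g : (Fin n → ℂ) → ℂ, Measurable g →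
      (∃ C : ℝ, ∀ z, ‖g z‖ ≤ C) →
      (∀ z, Lop n j (twistedConv n (⇑f) g) z = twistedConv n (Lop n j (⇑f)) g z) ∧
      (∀ z, Mop n j (twistedConv n (⇑f) g) z = twistedConv n (Mop n j (⇑f)) g z)) := by
  constructor
  · intro f hf z
    have hB := (hasFDeriv_B hf w z).fderiv
    constructor
    · rw [Lop, hB]
      exact B_Lop n j f w z
    · rw [Mop, hB]
      exact B_Mop n j f w z
  · rintro f g hg ⟨M, hM⟩
    constructor
    · intro z
      obtain ⟨hder, hInt', hIntF⟩ := key f g hg M hM z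
      have hfd : fderiv ℝ (twistedConv n (⇑f) g) z = ∫ w', g w' • B n (⇑f) w' z := hder.fderiv
      rw [Lop, hfd, ContinuousLinearMap.integral_apply hInt' (Pi.single j 1)]
      have h1 : Integrable (fun w' => (g w' • B n (⇑f) w' z) (Pi.single j 1)) := by
        have := (ContinuousLinearMap.apply ℝ ℂ (Pi.single j (1:ℂ))).integrable_comp hInt'
        simpa using this
      have h2 : Integrable (fun w' => Complex.I * ((z j).im : ℂ) / 2 *
          (f (z - w') * g w' * twistPhase n z w')) :=
        hIntF.const_mul _
      calc (∫ w', (g w' • B n (⇑f) w' z) (Pi.single j 1)) +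
            Complex.I * ((z j).im : ℂ) / 2 * twistedConv n (⇑f) g z
          = (∫ w', (g w' • B n (⇑f) w' z) (Pi.single j 1)) +
            ∫ w', Complex.I * ((z j).im : ℂ) / 2 *
              (f (z - w') * g w' * twistPhase n z w') := by
            rw [twistedConv, ← integral_const_mul]
        _ = ∫ w', ((g w' • B n (⇑f) w' z) (Pi.single j 1) +
              Complex.I * ((z j).im : ℂ) / 2 * (f (z - w') * g w' * twistPhase n z w')) :=
            (integral_add h1 h2).symm
        _ = ∫ w', Lop n j (⇑f) (z - w') * g w' * twistPhase n z w' := by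
            refine integral_congr_ae (Filter.Eventually.of_forall fun w' => ?_)
            have hBL := B_Lop n j (⇑f) w' z
            simp only [ContinuousLinearMap.smul_apply, smul_eq_mul]
            linear_combination g w' * hBL
        _ = twistedConv n (Lop n j (⇑f)) g z := rfl
    · intro z
      obtain ⟨hder, hInt', hIntF⟩ := key f g hg M hM z
      have hfd : fderiv ℝ (twistedConv n (⇑f) g) z = ∫ w', g w' • B n (⇑f) w' z := hder.fderiv
      rw [Mop, hfd, ContinuousLinearMap.integral_apply hInt' (Pi.single j Complex.I)]
      have h1 : Integrable (fun w' => (g w' • B n (⇑f) w' z) (Pi.single j Complex.I)) := by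
        have := (ContinuousLinearMap.apply ℝ ℂ (Pi.single j Complex.I)).integrable_comp hInt'
        simpa using this
      have h2 : Integrable (fun w' => Complex.I * ((z j).re : ℂ) / 2 *
          (f (z - w') * g w' * twistPhase n z w')) :=
        hIntF.const_mul _
      calc (∫ w', (g w' • B n (⇑f) w' z) (Pi.single j Complex.I)) -
            Complex.I * ((z j).re : ℂ) / 2 * twistedConv n (⇑f) g z
          = (∫ w', (g w' • B n (⇑f) w' z) (Pi.single j Complex.I)) -
            ∫ w', Complex.I * ((z j).re : ℂ) / 2 *
              (f (z - w') * g w' * twistPhase n z w') := by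
            rw [twistedConv, ← integral_const_mul]
        _ = ∫ w', ((g w' • B n (⇑f) w' z) (Pi.single j Complex.I) -
              Complex.I * ((z j).re : ℂ) / 2 * (f (z - w') * g w' * twistPhase n z w')) :=
            (integral_sub h1 h2).symm
        _ = ∫ w', Mop n j (⇑f) (z - w') * g w' * twistPhase n z w' := by
            refine integral_congr_ae (Filter.Eventually.of_forall fun w' => ?_)
            have hBM := B_Mop n j (⇑f) w' z
            simp only [ContinuousLinearMap.smul_apply, smul_eq_mul]
            linear_combination g w' * hBM
        _ = twistedConv n (Mop n j (⇑f)) g z := rfl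
end
end
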